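/- Let L be a commutative semiring and G a linearly ordered cancellative commutative monoid. Then the operations of R(L,G) satisfy all axioms of a commutative semiring not involving zero: addition on L × G is commutative and associative, multiplication makes L × G a commutative monoid with identity (1_L, 1_G), and multiplication distributes over addition on both sides. Consequently R(L,G)⁰, obtained by adjoining an absorbing zero element, is a commutative semiring. -/

import Mathlib

/-- Addition of the layered semiring `R(L,G)` on `L × G`. -/
def ladd {L G : Type*} [Add L] [LinearOrder G] (x y : L × G) : L × G :=
  if x.2 < y.2 then y else if y.2 < x.2 then x else (x.1 + y.1, x.2)

/-- Multiplication of the layered semiring `R(L,G)` on `L × G` (componentwise). -/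
def lmul {L G : Type*} [Mul L] [Mul G] (x y : L × G) : L × G :=
  (x.1 * y.1, x.2 * y.2)

/-- Addition of `R(L,G)⁰`, with the adjoined zero (= `none`) as additive identity. -/
def zadd {L G : Type*} [Add L] [LinearOrder G] :
    Option (L × G) → Option (L × G) → Option (L × G)
  | Option.none, y => y
  | x, Option.none => x
  | Option.some x, Option.some y => Option.some (ladd x y)

/-- Multiplication of `R(L,G)⁰`, with the adjoined zero (= `none`) absorbing. -/
def zmul {L G : Type*} [Mul L] [Mul G] :
    Option (L × G) → Option (L × G) → Option (L × G)
  | Option.none, _ => Option.none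
  | _, Option.none => Option.none
  | Option.some x, Option.some y => Option.some (lmul x y)

section aux
variable {L G : Type*} [CommSemiring L] [CommMonoid G] [LinearOrder G] [IsOrderedCancelMonoid G]

lemma ladd_of_lt {x y : L × G} (h : x.2 < y.2) : ladd x y = y := by
  simp [ladd, h]

lemma ladd_of_gt {x y : L × G} (h : y.2 < x.2) : ladd x y = x := by
  simp [ladd, h, h.not_gt]

lemma ladd_of_eq {x y : L × G} (h : x.2 = y.2) : ladd x y = (x.1 + y.1, x.2) := by
  simp [ladd, h]

lemma ladd_comm (x y : L × G) : ladd x y = ladd y x := by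
  rcases lt_trichotomy x.2 y.2 with h | h | h
  · rw [ladd_of_lt h, ladd_of_gt h]
  · rw [ladd_of_eq h, ladd_of_eq h.symm, add_comm, h]
  · rw [ladd_of_gt h, ladd_of_lt h]

lemma ladd_assoc (x y z : L × G) : ladd (ladd x y) z = ladd x (ladd y z) := by
  rcases lt_trichotomy x.2 y.2 with h1 | h1 | h1 <;>
    rcases lt_trichotomy y.2 z.2 with h2 | h2 | h2
  · rw [ladd_of_lt h1, ladd_of_lt h2, ladd_of_lt (h1.trans h2)]
  · rw [ladd_of_lt h1, ladd_of_eq h2]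
    rw [ladd_of_lt (show x.2 < ((y.1 + z.1, y.2) : L × G).2 from h1)]
  · rw [ladd_of_lt h1, ladd_of_gt h2, ladd_of_lt h1]
  · rw [ladd_of_eq h1, ladd_of_lt (show ((x.1 + y.1, x.2) : L × G).2 < z.2 from h1 ▸ h2),
      ladd_of_lt h2, ladd_of_lt (h1 ▸ h2)]
  · rw [ladd_of_eq h1, ladd_of_eq h2,
      ladd_of_eq (show ((x.1 + y.1, x.2) : L × G).2 = z.2 from h1.trans h2),
      ladd_of_eq (show x.2 = ((y.1 + z.1, y.2) : L × G).2 from h1), add_assoc]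
  · rw [ladd_of_eq h1, ladd_of_gt h2, ladd_of_eq h1,
      ladd_of_gt (show z.2 < ((x.1 + y.1, x.2) : L × G).2 from h1 ▸ h2)]
  · rw [ladd_of_gt h1, ladd_of_lt h2]
  · rw [ladd_of_gt h1, ladd_of_eq h2,
      ladd_of_gt (show ((y.1 + z.1, y.2) : L × G).2 < x.2 from h1)]
    exact (ladd_of_gt (h2 ▸ h1)).symm ▸ rfl
  · rw [ladd_of_gt h1, ladd_of_gt h2, ladd_of_gt (h2.trans h1), ladd_of_gt h1]

lemma lmul_ladd (x y z : L × G) : lmul x (ladd y z) = ladd (lmul x y) (lmul x z) := by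
  rcases lt_trichotomy y.2 z.2 with h | h | h
  · rw [ladd_of_lt h, ladd_of_lt (show (lmul x y).2 < (lmul x z).2 from
      mul_lt_mul_right h x.2)]
  · rw [ladd_of_eq h, ladd_of_eq (show (lmul x y).2 = (lmul x z).2 by
      simp [lmul, h])]
    simp [lmul, mul_add]
  · rw [ladd_of_gt h, ladd_of_gt (show (lmul x z).2 < (lmul x y).2 from
      mul_lt_mul_right h x.2)]

lemma lmul_comm (x y : L × G) : lmul x y = lmul y x := by
  simp [lmul, mul_comm]

end aux

/-- For a commutative semiring `L` and a linearly ordered cancellative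
commutative monoid `G`, the operations of `R(L,G)` satisfy all commutative semiring
axioms not involving zero (addition commutative and associative, multiplication a
commutative monoid with identity `(1,1)`, two-sided distributivity); consequently
`R(L,G)⁰`, obtained by adjoining an absorbing zero, is a commutative semiring. -/
theorem stmt3 {L G : Type*} [CommSemiring L] [CommMonoid G] [LinearOrder G] [IsOrderedCancelMonoid G] :
    (∀ x y : L × G, ladd x y = ladd y x) ∧
    (∀ x y z : L × G, ladd (ladd x y) z = ladd x (ladd y z)) ∧
    (∀ x y : L × G, lmul x y = lmul y x) ∧
    (∀ x y z : L × G, lmul (lmul x y) z = lmul x (lmul y z)) ∧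
    (∀ x : L × G, lmul ((1 : L), (1 : G)) x = x) ∧
    (∀ x : L × G, lmul x ((1 : L), (1 : G)) = x) ∧
    (∀ x y z : L × G, lmul x (ladd y z) = ladd (lmul x y) (lmul x z)) ∧
    (∀ x y z : L × G, lmul (ladd x y) z = ladd (lmul x z) (lmul y z)) ∧
    (∀ x y : Option (L × G), zadd x y = zadd y x) ∧
    (∀ x y z : Option (L × G), zadd (zadd x y) z = zadd x (zadd y z)) ∧
    (∀ x : Option (L × G), zadd Option.none x = x ∧ zadd x Option.none = x) ∧
    (∀ x y : Option (L × G), zmul x y = zmul y x) ∧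
    (∀ x y z : Option (L × G), zmul (zmul x y) z = zmul x (zmul y z)) ∧
    (∀ x : Option (L × G), zmul (Option.some ((1 : L), (1 : G))) x = x) ∧
    (∀ x : Option (L × G), zmul Option.none x = Option.none ∧ zmul x Option.none = Option.none) ∧
    (∀ x y z : Option (L × G), zmul x (zadd y z) = zadd (zmul x y) (zmul x z)) ∧
    (∀ x y z : Option (L × G), zmul (zadd x y) z = zadd (zmul x z) (zmul y z)) := by
  have rdist : ∀ x y z : L × G, lmul (ladd x y) z = ladd (lmul x z) (lmul y z) := by
    intro x y z
    rw [lmul_comm, lmul_ladd, lmul_comm z x, lmul_comm z y]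
  refine ⟨ladd_comm, ladd_assoc, lmul_comm, ?_, ?_, ?_, lmul_ladd, rdist,
    ?_, ?_, ?_, ?_, ?_, ?_, ?_, ?_, ?_⟩
  · intro x y z; simp [lmul, mul_assoc]
  · intro x; simp [lmul]
  · intro x; simp [lmul]
  · intro x y; cases x <;> cases y <;> simp [zadd, ladd_comm]
  · intro x y z; cases x <;> cases y <;> cases z <;> simp [zadd, ladd_assoc]
  · intro x; cases x <;> simp [zadd]
  · intro x y; cases x <;> cases y <;> simp [zmul, lmul_comm]
  · intro x y z; cases x <;> cases y <;> cases z <;> simp [zmul, lmul, mul_assoc]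
  · intro x; cases x <;> simp [zmul, lmul]
  · intro x; cases x <;> simp [zmul]
  · intro x y z; cases x <;> cases y <;> cases z <;> simp [zmul, zadd, lmul_ladd]
  · intro x y z; cases x <;> cases y <;> cases z <;> simp [zmul, zadd, rdist]
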